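/- Let p be a prime with p ≠ 3 and x ∈ ZMod p with x ≠ 0. Then ∑_{n=1}^{p-1} T_n(x) · ((-3)⁻¹)^n = (x² - 2x + 2)/x² in ZMod p, where T_n(x) denotes the n-th Touchard polynomial evaluated at x (reduced mod p). -/
import Mathlib

open Polynomial

/-- The Touchard polynomials in `ℤ[X]`, determined by `touchard 0 = 1` and
`touchard (n+1) = X * ∑_{k=0}^{n} C(n,k) * touchard k`. -/
noncomputable def touchard : ℕ → ℤ[X]
  | 0 => 1
  | n + 1 => X * ∑ k ∈ (Finset.range (n + 1)).attach, (n.choose k : ℤ[X]) * touchard k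
decreasing_by exact Finset.mem_range.mp k.2

lemma touchard_zero : touchard 0 = 1 := by rw [touchard]

lemma touchard_succ (n : ℕ) :
    touchard (n + 1) = X * ∑ k ∈ Finset.range (n + 1), (n.choose k : ℤ[X]) * touchard k := by
  rw [touchard]
  congr 1
  exact Finset.sum_attach (Finset.range (n + 1)) (fun k => (n.choose k : ℤ[X]) * touchard k)

section Aux

variable {p : ℕ} [hp : Fact p.Prime]

lemma tch_eval_succ (x : ZMod p) (n : ℕ) :
    aeval x (touchard (n + 1))
      = x * ∑ k ∈ Finset.range (n + 1), (n.choose k : ZMod p) * aeval x (touchard k) := by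
  rw [touchard_succ]
  simp

/-- weight `x^k / k!` -/
noncomputable def tw (p : ℕ) (x : ZMod p) (k : ℕ) : ZMod p := x ^ k * ((k.factorial : ZMod p))⁻¹

/-- signed binomial `(-1)^(k-j) C(k,j)` -/
def ts (p : ℕ) (k j : ℕ) : ZMod p := (-1) ^ (k - j) * (k.choose j : ZMod p)

noncomputable def tg (p : ℕ) (x : ZMod p) (n : ℕ) : ZMod p :=
  ∑ k ∈ Finset.range p, tw p x k * ∑ j ∈ Finset.range (k + 1), ts p k j * (j : ZMod p) ^ n

lemma natCast_ne_zero_zmod {k : ℕ} (h1 : 0 < k) (h2 : k < p) : (k : ZMod p) ≠ 0 := by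
  rw [Ne, ZMod.natCast_eq_zero_iff]
  intro hd
  exact absurd (Nat.le_of_dvd h1 hd) (not_le.2 h2)

lemma factorial_ne_zero_zmod {k : ℕ} (h : k < p) : ((k.factorial : ℕ) : ZMod p) ≠ 0 := by
  rw [Ne, ZMod.natCast_eq_zero_iff]
  intro hd
  exact absurd ((Nat.Prime.dvd_factorial hp.out).mp hd) (not_le.2 h)

lemma tw_succ (x : ZMod p) {k : ℕ} (h : k + 1 < p) :
    tw p x (k + 1) * ((k + 1 : ℕ) : ZMod p) = x * tw p x k := by
  have h1 : ((k + 1 : ℕ) : ZMod p) ≠ 0 := natCast_ne_zero_zmod (Nat.succ_pos k) h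
  have h2 : ((k.factorial : ℕ) : ZMod p) ≠ 0 := factorial_ne_zero_zmod (by omega)
  have h3 : ((k + 1 : ℕ) : ZMod p)⁻¹ * ((k + 1 : ℕ) : ZMod p) = 1 := inv_mul_cancel₀ h1
  unfold tw
  rw [Nat.factorial_succ, Nat.cast_mul, mul_inv, pow_succ]
  linear_combination (x ^ k * x * ((k.factorial : ZMod p))⁻¹) * h3

lemma sum_natCast_range {M : Type*} [AddCommMonoid M] (F : ZMod p → M) :
    ∑ j ∈ Finset.range p, F (j : ZMod p) = ∑ a : ZMod p, F a := by
  exact Finset.sum_nbij' (fun j => (j : ZMod p)) (fun a => a.val)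
    (fun a _ => Finset.mem_univ _)
    (fun a _ => Finset.mem_range.mpr (ZMod.val_lt a))
    (fun a ha => ZMod.val_cast_of_lt (Finset.mem_range.mp ha))
    (fun a _ => ZMod.natCast_rightInverse a)
    (fun a _ => rfl)

lemma sum_pow_range_zmod {n : ℕ} (h : n < p - 1) :
    ∑ j ∈ Finset.range p, ((j : ZMod p)) ^ n = 0 := by
  rw [sum_natCast_range (fun a => a ^ n)]
  exact FiniteField.sum_pow_lt_card_sub_one (K := ZMod p) n (by rwa [ZMod.card])

lemma choose_p_sub_one_zmod {j : ℕ} (h : j ≤ p - 1) :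
    (((p - 1).choose j : ℕ) : ZMod p) = (-1) ^ j := by
  induction j with
  | zero => simp
  | succ i ih =>
    have hpos := hp.out.pos
    have h2 := hp.out.two_le
    have hi : i ≤ p - 1 := by omega
    have hsum : (p - 1).choose i + (p - 1).choose (i + 1) = p.choose (i + 1) := by
      have hpe : p = (p - 1) + 1 := by omega
      conv_rhs => rw [hpe, Nat.choose_succ_succ]
    have hdvd : ((p.choose (i + 1) : ℕ) : ZMod p) = 0 := by
      rw [ZMod.natCast_eq_zero_iff]
      exact Nat.Prime.dvd_choose_self hp.out (by omega) (by omega)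
    have hc := congrArg (fun m : ℕ => (m : ZMod p)) hsum
    push_cast at hc
    rw [hdvd, ih hi] at hc
    rw [pow_succ]
    linear_combination hc

lemma alt_sum_ts (k : ℕ) :
    ∑ j ∈ Finset.range (k + 1), ts p k j = if k = 0 then 1 else 0 := by
  have h2 : ((∑ j ∈ Finset.range (k + 1), (-1 : ℤ) ^ j * (k.choose j) : ℤ) : ZMod p)
      = (((if k = 0 then 1 else 0 : ℤ)) : ZMod p) := by
    rw [Int.alternating_sum_range_choose]
  push_cast at h2
  calc ∑ j ∈ Finset.range (k + 1), ts p k j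
      = ∑ j ∈ Finset.range (k + 1), ts p k (k - j) := (Finset.sum_range_reflect _ _).symm
    _ = ∑ j ∈ Finset.range (k + 1), (-1 : ZMod p) ^ j * (k.choose j : ZMod p) := by
        apply Finset.sum_congr rfl
        intro j hj
        have hj' : j ≤ k := by have := Finset.mem_range.mp hj; omega
        unfold ts
        rw [Nat.sub_sub_self hj', Nat.choose_symm hj']
    _ = if k = 0 then 1 else 0 := by
        rw [h2]

lemma binom_sum_zmod (y : ZMod p) (n : ℕ) :
    ∑ m ∈ Finset.range (n + 1), (n.choose m : ZMod p) * y ^ m = (y + 1) ^ n := by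
  rw [add_pow]
  apply Finset.sum_congr rfl
  intro m _
  simp [mul_comm]

lemma A_succ (n k : ℕ) :
    ∑ j ∈ Finset.range (k + 2), ts p (k + 1) j * (j : ZMod p) ^ (n + 1)
      = ((k + 1 : ℕ) : ZMod p)
          * ∑ j ∈ Finset.range (k + 1), ts p k j * ((j : ZMod p) + 1) ^ n := by
  rw [Finset.sum_range_succ']
  have h0 : ts p (k + 1) 0 * ((0 : ℕ) : ZMod p) ^ (n + 1) = 0 := by
    simp [zero_pow (Nat.succ_ne_zero n)]
  rw [h0, add_zero, Finset.mul_sum]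
  apply Finset.sum_congr rfl
  intro i hi
  have hc : (k + 1) * k.choose i = (k + 1).choose (i + 1) * (i + 1) :=
    Nat.add_one_mul_choose_eq k i
  have hcc := congrArg (fun q : ℕ => (q : ZMod p)) hc
  push_cast at hcc
  unfold ts
  have hsub : k + 1 - (i + 1) = k - i := by omega
  rw [hsub]
  push_cast
  calc (-1 : ZMod p) ^ (k - i) * ((k + 1).choose (i + 1) : ZMod p) * ((i : ZMod p) + 1) ^ (n + 1)
      = ((-1 : ZMod p) ^ (k - i) * ((((k + 1).choose (i + 1) : ℕ) : ZMod p) * ((i : ZMod p) + 1)))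
          * ((i : ZMod p) + 1) ^ n := by rw [pow_succ]; ring
    _ = ((k : ZMod p) + 1) * ((-1) ^ (k - i) * (k.choose i : ZMod p) * ((i : ZMod p) + 1) ^ n) := by
        rw [← hcc]; ring

lemma tg_step (x : ZMod p) (hp2 : p ≠ 2) {n : ℕ} (h : n + 1 ≤ p - 1) :
    tg p x (n + 1) = x * ∑ m ∈ Finset.range (n + 1), (n.choose m : ZMod p) * tg p x m := by
  have hplt : 2 < p := lt_of_le_of_ne hp.out.two_le (Ne.symm hp2)
  set B : ℕ → ZMod p := fun k => ∑ j ∈ Finset.range (k + 1), ts p k j * ((j : ZMod p) + 1) ^ n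
    with hB
  have hBdef : ∀ k, B k = ∑ j ∈ Finset.range (k + 1), ts p k j * ((j : ZMod p) + 1) ^ n :=
    fun k => rfl
  have hrange : Finset.range p = Finset.range ((p - 1) + 1) := by
    congr 1
    omega
  -- RHS rewriting
  have hper : ∀ k, ∑ m ∈ Finset.range (n + 1),
      (n.choose m : ZMod p) * (tw p x k * ∑ j ∈ Finset.range (k + 1), ts p k j * (j : ZMod p) ^ m)
      = tw p x k * B k := by
    intro k
    calc ∑ m ∈ Finset.range (n + 1), (n.choose m : ZMod p)
          * (tw p x k * ∑ j ∈ Finset.range (k + 1), ts p k j * (j : ZMod p) ^ m)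
        = ∑ m ∈ Finset.range (n + 1), ∑ j ∈ Finset.range (k + 1),
            tw p x k * (ts p k j * ((n.choose m : ZMod p) * (j : ZMod p) ^ m)) := by
          apply Finset.sum_congr rfl
          intro m _
          rw [Finset.mul_sum, Finset.mul_sum]
          apply Finset.sum_congr rfl
          intro j _
          ring
      _ = ∑ j ∈ Finset.range (k + 1), ∑ m ∈ Finset.range (n + 1),
            tw p x k * (ts p k j * ((n.choose m : ZMod p) * (j : ZMod p) ^ m)) :=
          Finset.sum_comm
      _ = tw p x k * B k := by
          rw [hB, Finset.mul_sum]
          apply Finset.sum_congr rfl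
          intro j _
          rw [← Finset.mul_sum, ← Finset.mul_sum, binom_sum_zmod]
  have hrhs : ∑ m ∈ Finset.range (n + 1), (n.choose m : ZMod p) * tg p x m
      = ∑ k ∈ Finset.range p, tw p x k * B k := by
    unfold tg
    calc ∑ m ∈ Finset.range (n + 1), (n.choose m : ZMod p)
          * ∑ k ∈ Finset.range p, tw p x k * ∑ j ∈ Finset.range (k + 1), ts p k j * (j : ZMod p) ^ m
        = ∑ m ∈ Finset.range (n + 1), ∑ k ∈ Finset.range p, (n.choose m : ZMod p)
            * (tw p x k * ∑ j ∈ Finset.range (k + 1), ts p k j * (j : ZMod p) ^ m) := by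
          apply Finset.sum_congr rfl
          intro m _
          rw [Finset.mul_sum]
      _ = ∑ k ∈ Finset.range p, ∑ m ∈ Finset.range (n + 1), (n.choose m : ZMod p)
            * (tw p x k * ∑ j ∈ Finset.range (k + 1), ts p k j * (j : ZMod p) ^ m) :=
          Finset.sum_comm
      _ = ∑ k ∈ Finset.range p, tw p x k * B k := Finset.sum_congr rfl fun k _ => hper k
  -- B (p-1) = 0
  have hBtop : B (p - 1) = 0 := by
    have hodd : Odd p := hp.out.odd_of_ne_two hp2
    have heven : Even (p - 1) := by
      rcases hodd with ⟨t, ht⟩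
      exact ⟨t, by omega⟩
    have hts : ∀ j ∈ Finset.range ((p - 1) + 1), ts p (p - 1) j * ((j : ZMod p) + 1) ^ n
        = ((j : ZMod p) + 1) ^ n := by
      intro j hj
      have hj' : j ≤ p - 1 := by have := Finset.mem_range.mp hj; omega
      unfold ts
      rw [choose_p_sub_one_zmod hj', ← pow_add]
      have : p - 1 - j + j = p - 1 := by omega
      rw [this, heven.neg_one_pow, one_mul]
    rw [hB]
    simp only []
    rw [Finset.sum_congr rfl hts, ← hrange]
    rw [sum_natCast_range (fun a => (a + 1) ^ n)]
    have he : ∑ a : ZMod p, (a + 1) ^ n = ∑ a : ZMod p, a ^ n :=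
      Fintype.sum_equiv (Equiv.addRight (1 : ZMod p)) _ _ (fun a => rfl)
    rw [he]
    exact FiniteField.sum_pow_lt_card_sub_one (K := ZMod p) n (by rw [ZMod.card]; omega)
  -- LHS rewriting
  have hlhs : tg p x (n + 1) = ∑ i ∈ Finset.range (p - 1), x * (tw p x i * B i) := by
    unfold tg
    rw [hrange, Finset.sum_range_succ']
    have h0 : tw p x 0 * ∑ j ∈ Finset.range (0 + 1), ts p 0 j * (j : ZMod p) ^ (n + 1) = 0 := by
      simp [zero_pow (Nat.succ_ne_zero n)]
    rw [h0, add_zero]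
    apply Finset.sum_congr rfl
    intro i hi
    have hilt : i + 1 < p := by have := Finset.mem_range.mp hi; omega
    rw [A_succ n i, ← hBdef i]
    linear_combination (B i) * tw_succ x hilt
  rw [hlhs, hrhs, hrange, Finset.sum_range_succ, hBtop, mul_zero, add_zero, Finset.mul_sum]

lemma tg_zero (x : ZMod p) : tg p x 0 = 1 := by
  unfold tg
  have hterm : ∀ k ∈ Finset.range p,
      tw p x k * ∑ j ∈ Finset.range (k + 1), ts p k j * (j : ZMod p) ^ 0
        = if k = 0 then tw p x k else 0 := by
    intro k _
    simp only [pow_zero, mul_one]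
    rw [alt_sum_ts]
    split <;> simp
  rw [Finset.sum_congr rfl hterm, Finset.sum_ite_eq' (Finset.range p) 0 (tw p x)]
  rw [if_pos (Finset.mem_range.mpr hp.out.pos)]
  simp [tw, Nat.factorial]

lemma tch_eq_tg (hp2 : p ≠ 2) (x : ZMod p) : ∀ n, n ≤ p - 1 → aeval x (touchard n) = tg p x n := by
  intro n
  induction n using Nat.strong_induction_on with
  | _ n ih =>
    match n with
    | 0 =>
      intro _
      rw [touchard_zero, tg_zero]
      simp
    | Nat.succ m =>
      intro hle
      rw [tch_eval_succ, tg_step x hp2 hle]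
      congr 1
      apply Finset.sum_congr rfl
      intro k hk
      have hk' : k < m + 1 := Finset.mem_range.mp hk
      rw [ih k hk' (by omega)]

lemma geom_icc_zmod (y : ZMod p) :
    ∑ n ∈ Finset.Icc 1 (p - 1), y ^ n = if y = 1 then -1 else 0 := by
  have hpos := hp.out.pos
  have hIcc : Finset.Icc 1 (p - 1) = Finset.Ico 1 p := by
    rw [← Finset.Ico_add_one_right_eq_Icc]
    congr 1
    omega
  split
  · next hy =>
    subst hy
    simp only [one_pow, Finset.sum_const, Nat.card_Icc, nsmul_eq_mul, mul_one]
    rw [show p - 1 + 1 - 1 = p - 1 from by omega, Nat.cast_sub hpos, ZMod.natCast_self]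
    ring
  · next hy =>
    by_cases hy0 : y = 0
    · subst hy0
      apply Finset.sum_eq_zero
      intro n hn
      have := (Finset.mem_Icc.mp hn).1
      exact zero_pow (by omega)
    · have hfull : ∑ n ∈ Finset.range p, y ^ n = 1 := by
        rw [geom_sum_eq hy p, ZMod.pow_card]
        exact div_self (sub_ne_zero.mpr hy)
      have hsplit : ∑ n ∈ Finset.range p, y ^ n = y ^ 0 + ∑ n ∈ Finset.Icc 1 (p - 1), y ^ n := by
        rw [hIcc, Finset.range_eq_Ico, Finset.sum_eq_sum_Ico_succ_bot hpos]
      rw [hsplit, pow_zero] at hfull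
      linear_combination hfull

end Aux

theorem touchard_sum_m_three (p : ℕ) [hp : Fact p.Prime] (hp3 : p ≠ 3)
    (x : ZMod p) (hx : x ≠ 0) :
    ∑ n ∈ Finset.Icc 1 (p - 1), (aeval x (touchard n)) * ((-3 : ZMod p)⁻¹) ^ n
      = (x ^ 2 - 2 * x + 2) / x ^ 2 := by
  by_cases hp2 : p = 2
  · subst hp2
    have h1 : touchard 1 = X := by
      rw [touchard_succ]
      simp [touchard_zero]
    have : Finset.Icc 1 (2 - 1) = {1} := rfl
    rw [this, Finset.sum_singleton, h1]
    simp only [aeval_X]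
    have hx1 : x = 1 := by
      have h := ZMod.pow_card_sub_one_eq_one (p := 2) hx
      simpa using h
    subst hx1
    have h20 : (2 : ZMod 2) = 0 := by
      have h := ZMod.natCast_self 2
      push_cast at h
      exact h
    have h31 : (-3 : ZMod 2) = 1 := by linear_combination (-2 : ZMod 2) * h20
    rw [h31, inv_one, one_pow, mul_one, h20]
    norm_num
  · -- main case
    have hp5 : 5 ≤ p := by
      have h2 := hp.out.two_le
      have h4 : p ≠ 4 := by
        intro h
        rw [h] at hp
        exact absurd hp.out (by norm_num)
      omega
    set m := p - 3 with hm
    have hpm : p = m + 3 := by omega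
    have hm2 : 2 ≤ m := by omega
    -- basic facts
    have h3ne : (-3 : ZMod p) ≠ 0 := by
      have h3 : ((3 : ℕ) : ZMod p) ≠ 0 := by
        rw [Ne, ZMod.natCast_eq_zero_iff]
        intro hd
        exact hp3 ((Nat.prime_dvd_prime_iff_eq hp.out (by norm_num)).mp hd)
      intro hc
      apply h3
      push_cast
      linear_combination -hc
    have hcast : ∀ i : ℕ, i ≤ 3 → ((m + i : ℕ) : ZMod p) = (i : ZMod p) - 3 := by
      intro i hi
      have : ((m + i : ℕ) : ZMod p) = ((p : ℕ) : ZMod p) - 3 + i := by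
        have hrw : m + i = p - (3 - i) := by omega
        rw [hrw, Nat.cast_sub (by omega)]
        have : ((3 - i : ℕ) : ZMod p) = 3 - (i : ZMod p) := by
          rw [Nat.cast_sub (by omega)]
          push_cast
          ring
        rw [this]
        ring
      rw [this, ZMod.natCast_self]
      ring
    have hcm : ((m : ℕ) : ZMod p) = -3 := by
      have := hcast 0 (by omega)
      simpa using this
    have hcm1 : ((m : ℕ) : ZMod p) + 1 = -2 := by rw [hcm]; ring
    have hcm2 : ((m : ℕ) : ZMod p) + 2 = -1 := by rw [hcm]; ring
    have h2ne : (2 : ZMod p) ≠ 0 := by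
      have : ((2 : ℕ) : ZMod p) ≠ 0 := by
        rw [Ne, ZMod.natCast_eq_zero_iff]
        intro hd
        have := Nat.le_of_dvd (by norm_num) hd
        omega
      simpa using this
    -- factorial values
    have hfm2 : (((m + 2).factorial : ℕ) : ZMod p) = -1 := by
      have : m + 2 = p - 1 := by omega
      rw [this]
      exact ZMod.wilsons_lemma p
    have hfm1 : (((m + 1).factorial : ℕ) : ZMod p) = 1 := by
      have hstep : ((m + 2).factorial : ℕ) = (m + 2) * (m + 1).factorial := Nat.factorial_succ _
      have hc := congrArg (fun q : ℕ => (q : ZMod p)) hstep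
      push_cast at hc
      rw [hfm2, hcm2] at hc
      linear_combination hc
    have hfm : (((m).factorial : ℕ) : ZMod p) = (-2)⁻¹ := by
      have hstep : ((m + 1).factorial : ℕ) = (m + 1) * m.factorial := Nat.factorial_succ _
      have hc := congrArg (fun q : ℕ => (q : ZMod p)) hstep
      push_cast at hc
      rw [hfm1, hcm1] at hc
      have hmm : (-2 : ZMod p) * ((m.factorial : ℕ) : ZMod p) = 1 := by linear_combination -hc
      exact (inv_eq_of_mul_eq_one_right hmm).symm
    -- Step 1 : replace touchard values by tg
    rw [Finset.sum_congr rfl (fun n hn => by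
      rw [tch_eq_tg hp2 x n (by have := (Finset.mem_Icc.mp hn).2; omega)])]
    -- Step 2 : swap sums
    have hswap : ∑ n ∈ Finset.Icc 1 (p - 1), tg p x n * ((-3 : ZMod p)⁻¹) ^ n
        = ∑ k ∈ Finset.range p, tw p x k * ∑ j ∈ Finset.range (k + 1),
            ts p k j * ∑ n ∈ Finset.Icc 1 (p - 1), ((j : ZMod p) * (-3 : ZMod p)⁻¹) ^ n := by
      calc ∑ n ∈ Finset.Icc 1 (p - 1), tg p x n * ((-3 : ZMod p)⁻¹) ^ n
          = ∑ n ∈ Finset.Icc 1 (p - 1), ∑ k ∈ Finset.range p, ∑ j ∈ Finset.range (k + 1),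
              tw p x k * (ts p k j * ((j : ZMod p) * (-3 : ZMod p)⁻¹) ^ n) := by
            apply Finset.sum_congr rfl
            intro n _
            unfold tg
            rw [Finset.sum_mul]
            apply Finset.sum_congr rfl
            intro k _
            rw [mul_assoc, Finset.sum_mul, Finset.mul_sum]
            apply Finset.sum_congr rfl
            intro j _
            rw [mul_pow]
            ring
        _ = ∑ k ∈ Finset.range p, ∑ n ∈ Finset.Icc 1 (p - 1), ∑ j ∈ Finset.range (k + 1),
              tw p x k * (ts p k j * ((j : ZMod p) * (-3 : ZMod p)⁻¹) ^ n) := Finset.sum_comm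
        _ = ∑ k ∈ Finset.range p, ∑ j ∈ Finset.range (k + 1), ∑ n ∈ Finset.Icc 1 (p - 1),
              tw p x k * (ts p k j * ((j : ZMod p) * (-3 : ZMod p)⁻¹) ^ n) :=
            Finset.sum_congr rfl fun k _ => Finset.sum_comm
        _ = _ := by
            apply Finset.sum_congr rfl
            intro k _
            rw [Finset.mul_sum]
            apply Finset.sum_congr rfl
            intro j _
            rw [Finset.mul_sum, Finset.mul_sum]
    rw [hswap]
    -- Step 3 : inner geometric sums
    have hinner : ∀ k ∈ Finset.range p, tw p x k * ∑ j ∈ Finset.range (k + 1),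
        ts p k j * ∑ n ∈ Finset.Icc 1 (p - 1), ((j : ZMod p) * (-3 : ZMod p)⁻¹) ^ n
        = tw p x k * (if m ≤ k then -ts p k m else 0) := by
      intro k hk
      have hkp : k < p := Finset.mem_range.mp hk
      congr 1
      have hterm : ∀ j ∈ Finset.range (k + 1),
          ts p k j * ∑ n ∈ Finset.Icc 1 (p - 1), ((j : ZMod p) * (-3 : ZMod p)⁻¹) ^ n
          = if j = m then -ts p k j else 0 := by
        intro j hj
        have hjk : j < k + 1 := Finset.mem_range.mp hj
        rw [geom_icc_zmod]
        have hcond : ((j : ZMod p) * (-3 : ZMod p)⁻¹ = 1) ↔ j = m := by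
          rw [← div_eq_mul_inv, div_eq_one_iff_eq h3ne, ← hcm]
          constructor
          · intro hc
            have := congrArg ZMod.val hc
            rwa [ZMod.val_cast_of_lt (by omega), ZMod.val_cast_of_lt (by omega)] at this
          · intro hc
            rw [hc]
        by_cases hjm : j = m
        · rw [if_pos (hcond.mpr hjm), if_pos hjm]
          ring
        · rw [if_neg (fun hc => hjm (hcond.mp hc)), if_neg hjm]
          ring
      rw [Finset.sum_congr rfl hterm, Finset.sum_ite_eq' (Finset.range (k + 1)) m
        (fun j => -ts p k j)]
      simp only [Finset.mem_range, Nat.lt_succ_iff]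
    rw [Finset.sum_congr rfl hinner]
    -- Step 4 : peel off the top three terms
    have hz : ∀ k ∈ Finset.range m, tw p x k * (if m ≤ k then -ts p k m else 0) = 0 := by
      intro k hk
      have := Finset.mem_range.mp hk
      rw [if_neg (by omega), mul_zero]
    rw [show Finset.range p = Finset.range (m + 2 + 1) from by rw [hpm]]
    rw [Finset.sum_range_succ, Finset.sum_range_succ, Finset.sum_range_succ,
      Finset.sum_eq_zero hz, zero_add]
    rw [if_pos (le_refl m), if_pos (show m ≤ m + 1 by omega), if_pos (show m ≤ m + 2 by omega)]
    have hcmp : ((m : ℕ) : ZMod p) = -3 := hcm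
    -- ts values
    have hts0 : ts p m m = 1 := by simp [ts]
    have hts1 : ts p (m + 1) m = 2 := by
      unfold ts
      rw [show m + 1 - m = 1 by omega, Nat.choose_succ_self_right]
      push_cast
      rw [hcm1]
      ring
    have hch : (((m + 2).choose m : ℕ) : ZMod p) = 1 := by
      have hsym : (m + 2).choose m = (m + 2).choose 2 := by
        have hs := Nat.choose_symm (show 2 ≤ m + 2 by omega)
        rwa [show m + 2 - 2 = m by omega] at hs
      have h2d : 2 ∣ (m + 2) * (m + 1) := by
        rcases Nat.even_mul_succ_self (m + 1) with ⟨t, ht⟩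
        exact ⟨t, by rw [mul_comm, ht, two_mul]⟩
      have hval : 2 * ((m + 2).choose 2) = (m + 2) * (m + 1) := by
        rw [Nat.choose_two_right, show m + 2 - 1 = m + 1 by omega, Nat.mul_div_cancel' h2d]
      have hcc := congrArg (fun q : ℕ => (q : ZMod p)) hval
      push_cast at hcc
      rw [hsym]
      have h21 : (2 : ZMod p) * (((m + 2).choose 2 : ℕ) : ZMod p) = 2 * 1 := by
        rw [hcc, hcm]; ring
      exact mul_left_cancel₀ h2ne h21
    have hts2 : ts p (m + 2) m = 1 := by
      unfold ts
      rw [show m + 2 - m = 2 by omega, hch]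
      ring
    -- tw values
    have htw0 : tw p x m = x ^ m * (-2) := by
      unfold tw
      rw [hfm, inv_inv]
    have htw1 : tw p x (m + 1) = x ^ (m + 1) := by
      unfold tw
      rw [hfm1, inv_one, mul_one]
    have htw2 : tw p x (m + 2) = -x ^ (m + 2) := by
      unfold tw
      rw [hfm2, show ((-1 : ZMod p))⁻¹ = -1 from by rw [inv_neg, inv_one]]
      ring
    rw [htw0, htw1, htw2, hts0, hts1, hts2]
    have hx1 : x ^ (m + 2) = 1 := by
      rw [show m + 2 = p - 1 by omega]
      exact ZMod.pow_card_sub_one_eq_one hx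
    rw [eq_div_iff (pow_ne_zero 2 hx)]
    linear_combination (2 - 2 * x + x ^ 2) * hx1
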